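/- Any PCP solution over the instance W constructed from a normal system must begin with the pair (d·ℓ_d(fw), dd): if (u_1,v_1),...,(u_m,v_m) is a sequence of pairs from W with u_1⋯u_m = v_1⋯v_m and m ≥ 1, then (u_1, v_1) = (d·ℓ_d(fw), dd). -/

import Mathlib

/-- The alphabet `{a, b, c, f, d}`: `a, b` are the letters of the normal
system, and `c`, `f`, `d` are new marker letters. -/
inductive Γ | a | b | c | f | d
deriving DecidableEq

/-- `x` is one of the normal-system letters `a, b`. -/
def isAB (x : Γ) : Prop := x = Γ.a ∨ x = Γ.b

/-- The left desynchronization map `ℓ_d`: insert `d` before every letter. -/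
def ld (v : List Γ) : List Γ := v.flatMap (fun x => [Γ.d, x])

/-- The right desynchronization map `r_d`: insert `d` after every letter. -/
def rd (v : List Γ) : List Γ := v.flatMap (fun x => [x, Γ.d])

/-- One derivation step of the normal system with rule set `P`:
`u → v` iff there is a rule `α X ↦ X β` in `P` (the pair `(α, β)`) and a
word `x` with `u = α x` and `v = x β`. -/
def Step (P : List (List Γ × List Γ)) (u v : List Γ) : Prop :=
  ∃ p ∈ P, ∃ x : List Γ, u = p.1 ++ x ∧ v = x ++ p.2

/-- The rules `P` of a normal system over `{a, b}` with all rule words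
nonempty. -/
def GoodRules (P : List (List Γ × List Γ)) : Prop :=
  ∀ p ∈ P, p.1 ≠ [] ∧ p.2 ≠ [] ∧ (∀ x ∈ p.1, isAB x) ∧ (∀ x ∈ p.2, isAB x)

/-- A word over `{a, b}` that is nonempty. -/
def GoodWord (w : List Γ) : Prop := w ≠ [] ∧ ∀ x ∈ w, isAB x

/-- The PCP instance constructed from the normal system `S = (w, P)` and the
target word `u`:
`W = {(d·ℓ_d(fw), dd), (dd, r_d(fu)·d), (da, ad), (db, bd)}
   ∪ {(ℓ_d(c^j f), r_d(f α_j)), (ℓ_d(β_j), r_d(c^j)) : j = 1, ..., t}`,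
where the `j`-th rule (1-indexed) of `P` is `α_j X ↦ X β_j`. -/
def instW (P : List (List Γ × List Γ)) (w u : List Γ) :
    List (List Γ × List Γ) :=
  [(Γ.d :: ld (Γ.f :: w), [Γ.d, Γ.d]),
   ([Γ.d, Γ.d], rd (Γ.f :: u) ++ [Γ.d]),
   ([Γ.d, Γ.a], [Γ.a, Γ.d]),
   ([Γ.d, Γ.b], [Γ.b, Γ.d])] ++
  (P.zipIdx.map Prod.swap).flatMap (fun jp =>
    [(ld (List.replicate (jp.1 + 1) Γ.c ++ [Γ.f]), rd (Γ.f :: jp.2.1)),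
     (ld jp.2.2, rd (List.replicate (jp.1 + 1) Γ.c))])

/-- A PCP instance `W` has a solution: some nonempty sequence of pairs from
`W` has equal concatenations of first components and of second components. -/
def Solution (W : List (List Γ × List Γ)) : Prop :=
  ∃ s : List (List Γ × List Γ), s ≠ [] ∧ (∀ p ∈ s, p ∈ W) ∧
    (s.map Prod.fst).flatten = (s.map Prod.snd).flatten

theorem pcp_solution_starts_with_initial_pair
    (P : List (List Γ × List Γ)) (w u : List Γ)
    (hP : GoodRules P) (hw : GoodWord w) (hu : GoodWord u)
    (s : List (List Γ × List Γ)) (hs : s ≠ [])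
    (hmem : ∀ p ∈ s, p ∈ instW P w u)
    (heq : (s.map Prod.fst).flatten = (s.map Prod.snd).flatten) :
    s.head? = some (Γ.d :: ld (Γ.f :: w), [Γ.d, Γ.d]) := by

  obtain ⟨p, t, rfl⟩ := List.exists_cons_of_ne_nil hs
  have hp := hmem p List.mem_cons_self
  have hhead : (p.1 ++ (t.map Prod.fst).flatten).head? =
      (p.2 ++ (t.map Prod.snd).flatten).head? := by
    simp only [List.map_cons, List.flatten_cons] at heq
    rw [heq]
  simp only [List.head?_cons, Option.some.injEq]
  simp only [instW, List.mem_append, List.mem_cons, List.mem_flatMap,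
    List.not_mem_nil, or_false] at hp
  rcases hp with (h | h | h | h) | ⟨jp, hjp, h | h⟩
  · exact h
  · subst h; simp [rd] at hhead
  · subst h; simp at hhead
  · subst h; simp at hhead
  · subst h; simp [ld, rd, List.replicate_succ] at hhead
  · have hmem2 : jp.2 ∈ P := by
      obtain ⟨q, hq, rfl⟩ := List.mem_map.1 hjp
      exact List.fst_mem_of_mem_zipIdx hq
    obtain ⟨-, hβ, -, -⟩ := hP jp.2 hmem2
    obtain ⟨x, β', hx⟩ := List.exists_cons_of_ne_nil hβ
    subst h
    rw [hx] at hhead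
    simp [ld, rd, List.replicate_succ] at hhead
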